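/- The relation ∼_d on I^cf_λ, defined by α ∼_d β if and only if d̄(α) − r̄(α) = d̄(β) − r̄(β), is a congruence on the semigroup I^cf_λ, and the quotient semigroup I^cf_λ/∼_d is isomorphic to the additive group of integers ℤ(+); in fact, the map h : I^cf_λ → ℤ(+) given by (α)h = d̄(α) − r̄(α) is a surjective semigroup homomorphism with (α)h = (β)h if and only if α ∼_d β. -/

import Mathlib

open Function Set

namespace IcfPaper

variable {ι : Type*}

lemma trans_none_finite {f g : ι ≃. ι}
    (hf : {a | f a = none}.Finite) (hg : {b | g b = none}.Finite) :
    {a | (f.trans g) a = none}.Finite := by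
  have hsub : {a | (f.trans g) a = none} ⊆
      {a | f a = none} ∪ ⋃ b ∈ {b | g b = none}, {a | f.symm b = some a} := by
    intro a ha
    simp only [Set.mem_setOf_eq] at ha
    rcases hfa : f a with _ | b
    · exact Or.inl hfa
    · have hg' : g b = none := by
        have : (f.trans g) a = (f a).bind g := rfl
        rw [this, hfa] at ha
        exact ha
      refine Or.inr ?_
      refine Set.mem_biUnion hg' ?_
      exact (PEquiv.eq_some_iff f).2 hfa
  refine Set.Finite.subset (hf.union (hg.biUnion ?_)) hsub
  intro b _
  apply Set.Subsingleton.finite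
  intro a1 h1 a2 h2
  simp only [Set.mem_setOf_eq] at h1 h2
  rw [h1] at h2
  exact Option.some_injective _ h2

/-- The monoid of injective partial selfmaps of `ι` with cofinite domain and range. -/
def Icf (ι : Type*) : Type _ :=
  {f : ι ≃. ι // {a | f a = none}.Finite ∧ {b | f.symm b = none}.Finite}

namespace Icf

instance : Monoid (Icf ι) where
  mul f g := ⟨f.1.trans g.1, trans_none_finite f.2.1 g.2.1, by
      rw [PEquiv.symm_trans_rev]
      exact trans_none_finite g.2.2 f.2.2⟩
  one := ⟨PEquiv.refl ι, by
      constructor <;>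
      · convert Set.finite_empty
        ext a
        simp only [Set.mem_setOf_eq, Set.mem_empty_iff_false, iff_false]
        intro h
        first | exact Option.some_ne_none _ h | simp at h⟩
  mul_assoc a b c := Subtype.ext (PEquiv.trans_assoc _ _ _)
  one_mul a := Subtype.ext (PEquiv.refl_trans _)
  mul_one a := Subtype.ext (PEquiv.trans_refl _)

/-- The domain of an element of `Icf ι`. -/
def dom (f : Icf ι) : Set ι := {a | (f.1 a).isSome}

/-- The range of an element of `Icf ι`. -/
def ran (f : Icf ι) : Set ι := {b | (f.1.symm b).isSome}

/-- `d̄ f`, the number of points of `ι` outside of the domain of `f`. -/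
noncomputable def dbar (f : Icf ι) : ℕ := (dom f)ᶜ.ncard

/-- `r̄ f`, the number of points of `ι` outside of the range of `f`. -/
noncomputable def rbar (f : Icf ι) : ℕ := (ran f)ᶜ.ncard

end Icf

/-- The bicyclic semigroup `⟨p, q | pq = 1⟩`, realized as `ℕ × ℕ` with the operation
`(a,b)(c,d) = (a - b + max(b,c), d - c + max(b,c))`. -/
def Bicyclic : Type := ℕ × ℕ

instance : Mul Bicyclic :=
  ⟨fun x y => (x.1 - x.2 + max x.2 y.1, y.2 - y.1 + max x.2 y.1)⟩



namespace Icf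

lemma mul_val (f g : Icf ι) : (f * g).1 = f.1.trans g.1 := rfl

lemma compl_dom (f : Icf ι) : (dom f)ᶜ = {a | f.1 a = none} := by
  ext a; simp [dom, Option.not_isSome_iff_eq_none]

lemma compl_ran (f : Icf ι) : (ran f)ᶜ = {b | f.1.symm b = none} := by
  ext b; simp [ran, Option.not_isSome_iff_eq_none]

lemma compl_dom_finite (f : Icf ι) : (dom f)ᶜ.Finite := by rw [compl_dom]; exact f.2.1
lemma compl_ran_finite (f : Icf ι) : (ran f)ᶜ.Finite := by rw [compl_ran]; exact f.2.2

/-- Inverse of an element of `Icf ι`. -/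
def inv (f : Icf ι) : Icf ι := ⟨f.1.symm, f.2.2, by rw [PEquiv.symm_symm]; exact f.2.1⟩

lemma dom_inv (f : Icf ι) : dom (inv f) = ran f := rfl

lemma ran_inv (f : Icf ι) : ran (inv f) = dom f := by
  unfold ran dom inv; simp [PEquiv.symm_symm]

lemma dbar_inv (f : Icf ι) : dbar (inv f) = rbar f := rfl

lemma rbar_inv (f : Icf ι) : rbar (inv f) = dbar f := by
  unfold rbar dbar; rw [ran_inv]

lemma inv_mul_rev (f g : Icf ι) : inv (f * g) = inv g * inv f :=
  Subtype.ext (PEquiv.symm_trans_rev _ _)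

lemma dbar_mul (f g : Icf ι) :
    dbar (f * g) = dbar f + ((dom g)ᶜ ∩ ran f).ncard := by
  classical
  set E : Set ι := {a | ∃ b, f.1 a = some b ∧ g.1 b = none} with hE
  have hsplit : (dom (f * g))ᶜ = (dom f)ᶜ ∪ E := by
    rw [compl_dom, compl_dom, mul_val]
    ext a
    simp only [Set.mem_setOf_eq, Set.mem_union, hE]
    have happ : (f.1.trans g.1) a = (f.1 a).bind g.1 := rfl
    constructor
    · intro h
      rcases hfa : f.1 a with _ | b
      · exact Or.inl rfl
      · refine Or.inr ⟨b, rfl, ?_⟩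
        rw [happ, hfa, Option.bind_some] at h
        exact h
    · intro h
      rcases h with h | ⟨b, h1, h2⟩
      · rw [happ, h]; rfl
      · rw [happ, h1, Option.bind_some, h2]
  have hAfin : ((dom f)ᶜ).Finite := compl_dom_finite f
  have hEfin : E.Finite := by
    have h1 : ((dom f)ᶜ ∪ E).Finite := hsplit ▸ compl_dom_finite (f * g)
    exact h1.subset Set.subset_union_right
  have hdisj : Disjoint ((dom f)ᶜ) E := by
    rw [Set.disjoint_left]
    intro a ha haE
    rw [compl_dom] at ha
    obtain ⟨b, h1, _⟩ := haE
    rw [ha] at h1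
    exact Option.some_ne_none _ h1.symm
  have hinj : Set.InjOn (fun a => (f.1 a).getD a) E := by
    rintro a1 ⟨b1, hb1, _⟩ a2 ⟨b2, hb2, _⟩ h
    simp only [hb1, hb2, Option.getD_some] at h
    subst h
    have e1 : f.1.symm b1 = some a1 := (PEquiv.eq_some_iff f.1).2 hb1
    have e2 : f.1.symm b1 = some a2 := (PEquiv.eq_some_iff f.1).2 hb2
    rw [e1] at e2
    exact Option.some_injective _ e2
  have himg : (fun a => (f.1 a).getD a) '' E = (dom g)ᶜ ∩ ran f := by
    ext b
    constructor
    · rintro ⟨a, ⟨c, h1, h2⟩, rfl⟩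
      simp only [h1, Option.getD_some]
      refine ⟨by rw [compl_dom]; exact h2, ?_⟩
      show (f.1.symm c).isSome
      rw [(PEquiv.eq_some_iff f.1).2 h1]; rfl
    · rintro ⟨hb1, hb2⟩
      rw [compl_dom] at hb1
      obtain ⟨a, ha⟩ := Option.isSome_iff_exists.1 hb2
      have hfa : f.1 a = some b := (PEquiv.eq_some_iff f.1).1 ha
      exact ⟨a, ⟨b, hfa, hb1⟩, by simp [hfa]⟩
  have : dbar (f * g) = ((dom f)ᶜ).ncard + E.ncard := by
    rw [dbar, hsplit, Set.ncard_union_eq hdisj hAfin hEfin]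
  rw [this, dbar, ← himg, Set.ncard_image_of_injOn hinj]

lemma rbar_mul (f g : Icf ι) :
    rbar (f * g) = rbar g + ((ran f)ᶜ ∩ dom g).ncard := by
  rw [← dbar_inv, inv_mul_rev, dbar_mul, dbar_inv, ran_inv, dom_inv]

lemma hdiff_mul (f g : Icf ι) :
    (dbar (f * g) : ℤ) - (rbar (f * g) : ℤ) =
      ((dbar f : ℤ) - rbar f) + ((dbar g : ℤ) - rbar g) := by
  have h1 := dbar_mul f g
  have h2 := rbar_mul f g
  have h3 : ((dom g)ᶜ ∩ ran f).ncard + ((dom g)ᶜ ∩ (ran f)ᶜ).ncard = dbar g := by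
    rw [dbar, ← Set.ncard_inter_add_ncard_diff_eq_ncard ((dom g)ᶜ) (ran f)
      (compl_dom_finite g), Set.diff_eq]
  have h4 : ((ran f)ᶜ ∩ dom g).ncard + ((dom g)ᶜ ∩ (ran f)ᶜ).ncard = rbar f := by
    rw [rbar, ← Set.ncard_inter_add_ncard_diff_eq_ncard ((ran f)ᶜ) (dom g)
      (compl_ran_finite f), Set.diff_eq, Set.inter_comm ((dom g)ᶜ)]
  omega

/-- The shift built from an equivalence `ι ⊕ Fin n ≃ ι`. -/
noncomputable def shift (n : ℕ) (E : ι ⊕ Fin n ≃ ι) : Icf ι :=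
  ⟨{ toFun := fun a => Sum.elim some (fun _ => none) (E.symm a)
     invFun := fun b => some (E (Sum.inl b))
     inv := by
       intro a b
       simp only [Option.mem_def, Option.some.injEq]
       constructor
       · rintro rfl
         rw [Equiv.symm_apply_apply]
         rfl
       · intro h
         rcases hEa : E.symm a with x | j
         · rw [hEa] at h
           simp only [Sum.elim_inl, Option.some.injEq] at h
           subst h
           rw [← hEa, Equiv.apply_symm_apply]
         · rw [hEa] at h
           exact (Option.some_ne_none _ h.symm).elim },
   by
     refine Set.Finite.subset (Set.finite_range (fun j : Fin n => E (Sum.inr j))) ?_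
     intro a ha
     have ha' : Sum.elim some (fun _ : Fin n => (none : Option ι)) (E.symm a) = none := ha
     rcases hEa : E.symm a with x | j
     · rw [hEa] at ha'; exact (Option.some_ne_none _ ha').elim
     · exact ⟨j, by show E (Sum.inr j) = a; rw [← hEa, Equiv.apply_symm_apply]⟩,
   by
     convert Set.finite_empty
     ext b
     simp only [Set.mem_setOf_eq, Set.mem_empty_iff_false, iff_false]
     intro h
     exact Option.some_ne_none _ h⟩

lemma shift_dom_compl (n : ℕ) (E : ι ⊕ Fin n ≃ ι) :
    (dom (shift n E))ᶜ = Set.range (fun j : Fin n => E (Sum.inr j)) := by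
  rw [compl_dom]
  ext a
  simp only [Set.mem_setOf_eq, Set.mem_range]
  show Sum.elim some (fun _ : Fin n => (none : Option ι)) (E.symm a) = none ↔ _
  constructor
  · intro h
    rcases hEa : E.symm a with x | j
    · rw [hEa] at h; exact (Option.some_ne_none _ h).elim
    · exact ⟨j, by rw [← hEa, Equiv.apply_symm_apply]⟩
  · rintro ⟨j, rfl⟩
    rw [Equiv.symm_apply_apply]
    rfl

lemma shift_dbar (n : ℕ) (E : ι ⊕ Fin n ≃ ι) : dbar (shift n E) = n := by
  have hinj : Function.Injective (fun j : Fin n => E (Sum.inr j)) :=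
    fun j1 j2 h => Sum.inr_injective (E.injective h)
  rw [dbar, shift_dom_compl, ← Set.image_univ, Set.ncard_image_of_injective _ hinj,
    Set.ncard_univ, Nat.card_eq_fintype_card, Fintype.card_fin]

lemma shift_rbar (n : ℕ) (E : ι ⊕ Fin n ≃ ι) : rbar (shift n E) = 0 := by
  rw [rbar, compl_ran]
  convert Set.ncard_empty ι
  ext b
  simp only [Set.mem_setOf_eq, Set.mem_empty_iff_false, iff_false]
  intro h
  exact Option.some_ne_none _ h

lemma exists_equiv (ι : Type*) [Infinite ι] (n : ℕ) : Nonempty (ι ⊕ Fin n ≃ ι) := by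
  rw [← Cardinal.eq]
  rw [Cardinal.mk_sum, Cardinal.mk_fin, Cardinal.lift_id', Cardinal.lift_natCast]
  exact Cardinal.add_nat_eq n (Cardinal.infinite_iff.1 ‹_›)

end Icf

/-- The relation `α ∼_d β ↔ d̄(α) − r̄(α) = d̄(β) − r̄(β)` is a congruence on `Icf ι` and
the quotient is isomorphic to `ℤ(+)`: the map `h(α) = d̄(α) − r̄(α)` is a surjective
homomorphism to `ℤ(+)` whose kernel relation is exactly `∼_d`. -/
theorem statement17 {ι : Type*} [Infinite ι] :
    (∀ a a' b b' : Icf ι,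
      (Icf.dbar a : ℤ) - (Icf.rbar a : ℤ) = (Icf.dbar a' : ℤ) - (Icf.rbar a' : ℤ) →
      (Icf.dbar b : ℤ) - (Icf.rbar b : ℤ) = (Icf.dbar b' : ℤ) - (Icf.rbar b' : ℤ) →
      (Icf.dbar (a * b) : ℤ) - (Icf.rbar (a * b) : ℤ) =
        (Icf.dbar (a' * b') : ℤ) - (Icf.rbar (a' * b') : ℤ)) ∧
    Function.Surjective (fun α : Icf ι => (Icf.dbar α : ℤ) - (Icf.rbar α : ℤ)) ∧
    (∀ a b : Icf ι,
      (Icf.dbar (a * b) : ℤ) - (Icf.rbar (a * b) : ℤ) =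
        ((Icf.dbar a : ℤ) - (Icf.rbar a : ℤ)) + ((Icf.dbar b : ℤ) - (Icf.rbar b : ℤ))) := by
  have key : ∀ a b : Icf ι,
      (Icf.dbar (a * b) : ℤ) - (Icf.rbar (a * b) : ℤ) =
        ((Icf.dbar a : ℤ) - (Icf.rbar a : ℤ)) + ((Icf.dbar b : ℤ) - (Icf.rbar b : ℤ)) :=
    fun a b => Icf.hdiff_mul a b
  refine ⟨fun a a' b b' h1 h2 => by rw [key, key, h1, h2], ?_, key⟩
  intro n
  obtain ⟨m, hm | hm⟩ := Int.eq_nat_or_neg n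
  · obtain ⟨E⟩ := Icf.exists_equiv ι m
    exact ⟨Icf.shift m E, by simp [Icf.shift_dbar, Icf.shift_rbar, hm]⟩
  · obtain ⟨E⟩ := Icf.exists_equiv ι m
    refine ⟨Icf.inv (Icf.shift m E), ?_⟩
    simp [Icf.dbar_inv, Icf.rbar_inv, Icf.shift_dbar, Icf.shift_rbar, hm]


end IcfPaper
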